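/- Let N be a finite nontrivial f-near-ring with Nat.card N = p^q, where p and q are prime numbers, and suppose N is not a near-field, i.e. there exists n : N with n ≠ 0 that is not a unit. Then the number of units of N equals p − 1, and for any two units a, b of N with a ≠ b, the element a − b is a unit; in particular N is an a-near-ring and its units together with 0 form a field isomorphic to ℤ_p. -/

import Mathlib

private lemma freecount {Γ X : Type*} [Group Γ] [Finite Γ] [Finite X]
    (act : Γ → X → X) (hone : ∀ x, act 1 x = x)
    (hmul : ∀ g h x, act (g * h) x = act g (act h x))
    (hfree : ∀ g x, act g x = x → g = 1) :
    Nat.card Γ ∣ Nat.card X := by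
  classical
  letI : MulAction Γ X := { smul := act, one_smul := hone, mul_smul := hmul }
  letI : Fintype X := Fintype.ofFinite X
  letI : Fintype (MulAction.orbitRel.Quotient Γ X) := Fintype.ofFinite _
  letI : ∀ ω : MulAction.orbitRel.Quotient Γ X, Fintype (MulAction.orbit Γ ω.out) :=
    fun ω => Fintype.ofFinite _
  have horb : ∀ x : X, Nat.card (MulAction.orbit Γ x) = Nat.card Γ := by
    intro x
    have hstab : MulAction.stabilizer Γ x = ⊥ := by
      rw [Subgroup.eq_bot_iff_forall]
      intro g hg
      exact hfree g x hg
    rw [Nat.card_congr (MulAction.orbitEquivQuotientStabilizer Γ x), hstab]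
    exact Nat.card_congr (QuotientGroup.quotientBot (G := Γ)).toEquiv
  rw [Nat.card_congr (MulAction.selfEquivSigmaOrbits Γ X)]
  have hs : Nat.card ((ω : MulAction.orbitRel.Quotient Γ X) × (MulAction.orbit Γ ω.out)) =
      Fintype.card ((ω : MulAction.orbitRel.Quotient Γ X) × (MulAction.orbit Γ ω.out)) :=
    Nat.card_eq_fintype_card
  rw [hs, Fintype.card_sigma]
  apply Finset.dvd_sum
  intro ω _
  rw [Fintype.card_eq_nat_card, horb]

private lemma dvd_pow_sub_one_gcd {d P r s : ℕ} (hP : 2 ≤ P)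
    (h1 : d ∣ P ^ r - 1) (h2 : d ∣ P ^ s - 1) (hg : Nat.gcd r s = 1) :
    d ∣ P - 1 := by
  have key : ∀ m : ℕ, (d ∣ P ^ m - 1) ↔ ((P : ZMod d) ^ m = 1) := by
    intro m
    have h1le : 1 ≤ P ^ m := Nat.one_le_pow _ _ (by omega)
    rw [← ZMod.natCast_eq_zero_iff, Nat.cast_sub h1le, Nat.cast_pow, Nat.cast_one,
      sub_eq_zero]
  have e1 : (P : ZMod d) ^ r = 1 := (key r).mp h1
  have e2 : (P : ZMod d) ^ s = 1 := (key s).mp h2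
  have hord : orderOf (P : ZMod d) ∣ Nat.gcd r s :=
    Nat.dvd_gcd (orderOf_dvd_of_pow_eq_one e1) (orderOf_dvd_of_pow_eq_one e2)
  rw [hg, Nat.dvd_one, orderOf_eq_one_iff] at hord
  have := (key 1).mpr (by rwa [pow_one])
  simpa using this

private lemma two_le_card {α : Type*} [Finite α] {x y : α} (h : x ≠ y) : 2 ≤ Nat.card α := by
  letI : Fintype α := Fintype.ofFinite α
  rw [Nat.card_eq_fintype_card]
  exact Fintype.one_lt_card_iff_nontrivial.mpr ⟨⟨x, y, h⟩⟩

private lemma card_ne_compl {α : Type*} [Finite α] (z : α) :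
    Nat.card {x : α // x ≠ z} = Nat.card α - 1 := by
  classical
  letI : Fintype α := Fintype.ofFinite α
  rw [Nat.card_eq_fintype_card, Nat.card_eq_fintype_card]
  have : Fintype.card {x : α // ¬ (x = z)} = Fintype.card α - Fintype.card {x : α // x = z} :=
    Fintype.card_subtype_compl _
  rw [Fintype.card_subtype_eq] at this
  exact this

/-- A finite nontrivial f-near-ring of order `p^q` (`p`, `q` prime)
which is not a near-field has exactly `p - 1` units, is an a-near-ring, and its
units together with `0` form a field isomorphic to `ℤ_p`. -/
theorem stmt18 {N : Type*} [AddGroup N] [Mul N] [One N] [Finite N]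
    (hassoc : ∀ a b c : N, (a * b) * c = a * (b * c))
    (hdist : ∀ a b c : N, (a + b) * c = a * c + b * c)
    (honel : ∀ a : N, 1 * a = a) (honer : ∀ a : N, a * 1 = a)
    (hzero : ∀ a : N, a * 0 = 0)
    (hf : ∀ u : N, (∃ v : N, u * v = 1 ∧ v * u = 1) → u ≠ 1 →
      ∀ n : N, n * u = n → n = 0)
    (hnt : (0 : N) ≠ 1)
    (p q : ℕ) (hp : Nat.Prime p) (hq : Nat.Prime q)
    (hcard : Nat.card N = p ^ q)
    (hnnf : ∃ n : N, n ≠ 0 ∧ ¬ ∃ v : N, n * v = 1 ∧ v * n = 1) :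
    Nat.card {u : N // ∃ v : N, u * v = 1 ∧ v * u = 1} = p - 1 ∧
    (∀ a b : N, (∃ v : N, a * v = 1 ∧ v * a = 1) →
      (∃ v : N, b * v = 1 ∧ v * b = 1) → a ≠ b →
      ∃ v : N, (a - b) * v = 1 ∧ v * (a - b) = 1) ∧
    (∃ f : ZMod p → N, Function.Injective f ∧
      Set.range f = {n : N | n = 0 ∨ ∃ v : N, n * v = 1 ∧ v * n = 1} ∧
      (∀ x y : ZMod p, f (x + y) = f x + f y) ∧
      (∀ x y : ZMod p, f (x * y) = f x * f y) ∧
      f 1 = 1) := by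
  classical
  letI : Monoid N := { mul_assoc := hassoc, one_mul := honel, mul_one := honer }
  -- basic identities
  have hzero' : ∀ a : N, (0 : N) * a = 0 := by
    intro a
    have h := hdist 0 0 a
    rw [add_zero] at h
    exact (left_eq_add.mp h)
  have hneg : ∀ a b : N, (-a) * b = -(a * b) := by
    intro a b
    have h := hdist a (-a) b
    rw [add_neg_cancel, hzero'] at h
    exact (neg_eq_of_add_eq_zero_right h.symm).symm
  have hsub : ∀ a b c : N, (a - b) * c = a * c - b * c := by
    intro a b c
    rw [sub_eq_add_neg, sub_eq_add_neg, hdist, hneg]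
  -- one-sided inverses give units
  have hmono_left : ∀ z a : N, a * z = 1 → IsUnit z := by
    intro z a h
    have hinj : Function.Injective (fun x : N => z * x) := by
      intro x y hxy
      have h2 : a * (z * x) = a * (z * y) := congrArg (fun w => a * w) hxy
      rwa [← hassoc, ← hassoc, h, honel, honel] at h2
    obtain ⟨b, hb0⟩ := (Finite.injective_iff_surjective.mp hinj) 1
    have hb : z * b = 1 := hb0
    have hab : a = b := by
      calc a = a * (z * b) := by rw [hb, honer]
      _ = (a * z) * b := (hassoc _ _ _).symm
      _ = b := by rw [h, honel]
    exact isUnit_iff_exists.mpr ⟨b, hb, hab ▸ h⟩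
  have hmono_right : ∀ z b : N, z * b = 1 → IsUnit z := by
    intro z b h
    have hinj : Function.Injective (fun x : N => x * z) := by
      intro x y hxy
      have h2 : (x * z) * b = (y * z) * b := congrArg (fun w => w * b) hxy
      rwa [hassoc, hassoc, h, honer, honer] at h2
    obtain ⟨a, ha0⟩ := (Finite.injective_iff_surjective.mp hinj) 1
    exact hmono_left z a ha0
  -- nsmul lemmas
  have hns : ∀ (m : ℕ) (x : N), (m • (1 : N)) * x = m • x := by
    intro m x
    induction m with
    | zero => rw [zero_nsmul, zero_nsmul, hzero']
    | succ k ih => rw [succ_nsmul, succ_nsmul, hdist, ih, honel]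
  have hmul1 : ∀ m n : ℕ, (m • (1 : N)) * (n • (1 : N)) = (m * n) • (1 : N) := by
    intro m n
    rw [hns, ← mul_nsmul, Nat.mul_comm]
  set t := addOrderOf (1 : N) with ht
  have htzero : t • (1 : N) = 0 := addOrderOf_nsmul_eq_zero (1 : N)
  have hmod : ∀ m : ℕ, (m % t) • (1 : N) = m • (1 : N) := by
    intro m
    conv_rhs => rw [← Nat.div_add_mod m t]
    rw [add_nsmul, mul_nsmul, htzero, smul_zero, zero_add]
  have hinj1 : ∀ m n : ℕ, m < t → n < t → m • (1 : N) = n • (1 : N) → m = n := by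
    have key : ∀ m n : ℕ, m ≤ n → n < t → m • (1 : N) = n • (1 : N) → m = n := by
      intro m n hmn hnt' heq
      have h2 : (n - m) • (1 : N) + m • (1 : N) = n • (1 : N) := by
        rw [← add_nsmul, Nat.sub_add_cancel hmn]
      rw [← heq, add_eq_right] at h2
      have := addOrderOf_dvd_iff_nsmul_eq_zero.mpr h2
      rw [← ht] at this
      have hlt : n - m < t := lt_of_le_of_lt (Nat.sub_le _ _) hnt'
      have := Nat.eq_zero_of_dvd_of_lt this hlt
      omega
    intro m n hm hn heq
    rcases le_total m n with h | h
    · exact key m n h hn heq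
    · exact (key n m h hm heq.symm).symm
  -- t is at least 2 and divides p^q
  have htdvd : t ∣ p ^ q := hcard ▸ addOrderOf_dvd_natCard (1 : N)
  have ht0 : t ≠ 0 := by
    intro h0
    rw [h0] at htdvd
    have := Nat.eq_zero_of_zero_dvd htdvd
    exact (Nat.pow_pos hp.pos : 0 < p ^ q).ne' this  -- p^q ≠ 0
  have ht1 : t ≠ 1 := by
    intro h1
    have : (1 : N) = 0 := by
      have := htzero
      rw [h1, one_nsmul] at this
      exact this
    exact hnt this.symm
  have ht2 : 2 ≤ t := by omega
  -- units: lift exists-form to IsUnit and Units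
  have hval_unit : ∀ u : Nˣ, ∃ v : N, (u : N) * v = 1 ∧ v * (u : N) = 1 :=
    fun u => ⟨(u⁻¹ : Nˣ), u.mul_inv, u.inv_mul⟩
  -- the equivalence between Nˣ and the subtype of units
  let eU : Nˣ ≃ {u : N // ∃ v : N, u * v = 1 ∧ v * u = 1} :=
  { toFun := fun u => ⟨(u : N), hval_unit u⟩
    invFun := fun x => ⟨x.1, Classical.choose x.2, (Classical.choose_spec x.2).1,
      (Classical.choose_spec x.2).2⟩
    left_inv := fun u => Units.ext rfl
    right_inv := fun x => Subtype.ext rfl }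
  -- powers of units are units with coercion
  have hpow_unit : ∀ (u : Nˣ) (j : ℕ), ∃ v : N, ((u ^ j : Nˣ) : N) * v = 1 ∧
      v * ((u ^ j : Nˣ) : N) = 1 := fun u j => hval_unit (u ^ j)
  -- key cyclic counting lemma
  have cyclecount : ∀ (u : Nˣ) (P : N → Prop), (∀ x, P x → x ≠ 0) →
      (∀ x, P x → P (x * (u : N))) → orderOf u ∣ Nat.card {x : N // P x} := by
    intro u P hP0 hPcl
    set d := orderOf u with hd
    have hd0 : d ≠ 0 := by
      have h1 : d ∣ Nat.card Nˣ := orderOf_dvd_natCard u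
      have h2 : Nat.card Nˣ ≠ 0 := Nat.card_pos.ne'
      intro h
      rw [h] at h1
      exact h2 (Nat.eq_zero_of_zero_dvd h1)
    letI : NeZero d := ⟨hd0⟩
    have hPpow : ∀ (j : ℕ) (x : N), P x → P (x * ((u ^ j : Nˣ) : N)) := by
      intro j
      induction j with
      | zero => intro x hx; simpa [honer] using hx
      | succ k ih =>
          intro x hx
          have : ((u ^ (k+1) : Nˣ) : N) = ((u ^ k : Nˣ) : N) * (u : N) := by
            rw [pow_succ, Units.val_mul]
          rw [this, ← hassoc]
          exact hPcl _ (ih x hx)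
    have hfin : Finite (Multiplicative (ZMod d)) := Finite.of_equiv _ Multiplicative.ofAdd
    have hdvd : Nat.card (Multiplicative (ZMod d)) ∣ Nat.card {x : N // P x} := by
      apply freecount (fun g x => ⟨x.1 * ((u ^ (Multiplicative.toAdd g).val : Nˣ) : N), hPpow _ _ x.2⟩)
      · intro x
        apply Subtype.ext
        show x.1 * ((u ^ (Multiplicative.toAdd (1 : Multiplicative (ZMod d))).val : Nˣ) : N) = x.1
        simp [honer]
      · intro g h x
        apply Subtype.ext
        show x.1 * ((u ^ (Multiplicative.toAdd (g * h)).val : Nˣ) : N)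
            = (x.1 * ((u ^ (Multiplicative.toAdd h).val : Nˣ) : N)) * ((u ^ (Multiplicative.toAdd g).val : Nˣ) : N)
        rw [hassoc, ← Units.val_mul, ← pow_add]
        have : Multiplicative.toAdd (g * h) = Multiplicative.toAdd g + Multiplicative.toAdd h := rfl
        rw [this, ZMod.val_add, pow_mod_orderOf, Nat.add_comm]
      · intro g x hx
        have hx1 : x.1 * ((u ^ (Multiplicative.toAdd g).val : Nˣ) : N) = x.1 := congrArg Subtype.val hx
        have hne : x.1 ≠ 0 := hP0 _ x.2
        have hu1 : ((u ^ (Multiplicative.toAdd g).val : Nˣ) : N) = 1 := by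
          by_contra hcon
          exact hne (hf _ (hpow_unit u _) hcon _ hx1)
        have : u ^ (Multiplicative.toAdd g).val = 1 := Units.ext hu1
        have hdv : d ∣ (Multiplicative.toAdd g).val := orderOf_dvd_of_pow_eq_one this
        have hlt : (Multiplicative.toAdd g).val < d := ZMod.val_lt _
        have hz : (Multiplicative.toAdd g).val = 0 := Nat.eq_zero_of_dvd_of_lt hdv hlt
        have hg0 : Multiplicative.toAdd g = 0 := (ZMod.val_eq_zero _).mp hz
        apply Multiplicative.toAdd.injective
        rw [hg0, toAdd_one]
    calc d = Nat.card (Multiplicative (ZMod d)) := by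
          rw [Nat.card_congr (Multiplicative.toAdd (α := ZMod d)), Nat.card_zmod]
    _ ∣ Nat.card {x : N // P x} := hdvd
  -- the fiber {x | x * w = w} has cardinality dividing card N
  have fibcard : ∀ w : N, Nat.card {x : N // x * w = w} ∣ Nat.card N := by
    intro w
    let ρ : N →+ N := AddMonoidHom.mk' (fun x => x * w) (fun a b => hdist a b w)
    have e : {x : N // x * w = w} ≃ ρ.ker :=
    { toFun := fun x => ⟨x.1 - 1, by
        have : (x.1 - 1) * w = 0 := by rw [hsub, honel, x.2, sub_self]
        exact AddMonoidHom.mem_ker.mpr this⟩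
      invFun := fun y => ⟨y.1 + 1, by
        have hy : y.1 * w = 0 := AddMonoidHom.mem_ker.mp y.2
        rw [hdist, honel, hy, zero_add]⟩
      left_inv := fun x => Subtype.ext (by simp)
      right_inv := fun y => Subtype.ext (by simp) }
    rw [Nat.card_congr e]
    exact AddSubgroup.card_addSubgroup_dvd_card ρ.ker
  -- free-left lemma : a unit fixing a nonzero element on the left is 1
  have hfree_left : ∀ (u : Nˣ) (w : N), w ≠ 0 → (u : N) * w = w → u = 1 := by
    intro u w hw hu
    have h1 : orderOf u ∣ Nat.card {x : N // x * w = w} := by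
      apply cyclecount u (fun x => x * w = w)
      · intro x hx h0
        rw [h0, hzero'] at hx
        exact hw hx.symm
      · intro x hx
        show (x * (u : N)) * w = w
        rw [hassoc, hu, hx]
    have h2 : orderOf u ∣ p ^ q := h1.trans (hcard ▸ fibcard w)
    have h3 : orderOf u ∣ p ^ q - 1 := by
      have := cyclecount u (fun x => x ≠ 0) (fun x hx => hx) ?_
      · rwa [card_ne_compl (0 : N), hcard] at this
      · intro x hx h0
        apply hx
        have : x = (x * (u : N)) * ((u⁻¹ : Nˣ) : N) := by
          rw [hassoc, ← Units.val_mul, mul_inv_cancel, Units.val_one, honer]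
        rw [this, h0, hzero']
    have hord : orderOf u = 1 := by
      have hpq1 : 1 ≤ p ^ q := Nat.one_le_pow _ _ hp.pos
      have hd := Nat.dvd_sub h2 h3
      rw [Nat.sub_sub_self hpq1] at hd
      exact Nat.dvd_one.mp hd
    exact orderOf_eq_one_iff.mp hord
  -- number of units
  set a := Nat.card Nˣ with ha
  have ha0 : a ≠ 0 := Nat.card_pos.ne'
  -- units act (on the left) on any left-multiplicatively-closed set of nonzero elements
  have groupcount : ∀ P : N → Prop, (∀ x, P x → x ≠ 0) →
      (∀ (u : Nˣ) (x : N), P x → P ((u : N) * x)) → a ∣ Nat.card {x : N // P x} := by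
    intro P hP0 hPcl
    apply freecount (fun (u : Nˣ) (x : {x : N // P x}) => ⟨(u : N) * x.1, hPcl u x.1 x.2⟩)
    · intro x
      apply Subtype.ext
      show ((1 : Nˣ) : N) * x.1 = x.1
      rw [Units.val_one, honel]
    · intro g h x
      apply Subtype.ext
      show ((g * h : Nˣ) : N) * x.1 = (g : N) * ((h : N) * x.1)
      rw [Units.val_mul, hassoc]
    · intro g x hx
      have := congrArg Subtype.val hx
      exact hfree_left g x.1 (hP0 _ x.2) this
  have hadvd1 : a ∣ p ^ q - 1 := by
    have := groupcount (fun x => x ≠ 0) (fun x hx => hx) ?_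
    · rwa [card_ne_compl (0 : N), hcard] at this
    · intro u x hx h0
      apply hx
      have : x = ((u⁻¹ : Nˣ) : N) * ((u : N) * x) := by
        rw [← hassoc, ← Units.val_mul, inv_mul_cancel, Units.val_one, honel]
      rw [this, h0, hzero]
  -- the nonunit and its range subgroup
  obtain ⟨n0, hn0ne, hn0nu⟩ := hnnf
  have hn0nu' : ¬ IsUnit n0 := fun h => hn0nu (isUnit_iff_exists.mp h)
  let ρ0 : N →+ N := AddMonoidHom.mk' (fun x => x * n0) (fun x y => hdist x y n0)
  set W := ρ0.range with hW
  have hWleft : ∀ (z : N) (y : N), y ∈ W → z * y ∈ W := by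
    intro z y hy
    obtain ⟨x, hx⟩ := hy
    exact ⟨z * x, by show (z * x) * n0 = z * y; rw [hassoc]; exact congrArg (fun w => z * w) hx⟩
  have hn0W : n0 ∈ W := ⟨1, honel n0⟩
  -- cardinality of W
  have hWdvd : Nat.card W ∣ p ^ q := hcard ▸ AddSubgroup.card_addSubgroup_dvd_card W
  obtain ⟨r, hrq, hcW⟩ := (Nat.dvd_prime_pow hp).mp hWdvd
  -- W is nontrivial
  have hW2 : 2 ≤ Nat.card W :=
    two_le_card (show (⟨n0, hn0W⟩ : W) ≠ ⟨0, W.zero_mem⟩ from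
      fun h => hn0ne (congrArg Subtype.val h))
  -- W is proper
  have hWproper : Nat.card W < p ^ q := by
    have hnotinj : ¬ Function.Injective ρ0 := by
      intro hinj
      have hsurj := Finite.injective_iff_surjective.mp hinj
      obtain ⟨x, hx⟩ := hsurj 1
      exact hn0nu' (hmono_left n0 x hx)
    have hker : 2 ≤ Nat.card ρ0.ker := by
      have : ∃ x : N, x ≠ 0 ∧ x ∈ ρ0.ker := by
        simp only [Function.Injective] at hnotinj
        push_neg at hnotinj
        obtain ⟨x, y, hxy, hne⟩ := hnotinj
        refine ⟨x - y, sub_ne_zero_of_ne hne, ?_⟩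
        apply AddMonoidHom.mem_ker.mpr
        show (x - y) * n0 = 0
        rw [hsub]
        have hxx : x * n0 = y * n0 := hxy
        rw [hxx, sub_self]
      obtain ⟨x, hxne, hxk⟩ := this
      exact two_le_card (show (⟨x, hxk⟩ : ρ0.ker) ≠ ⟨0, ρ0.ker.zero_mem⟩ from
        fun h => hxne (congrArg Subtype.val h))
    have hprod : Nat.card W * Nat.card ρ0.ker = p ^ q := by
      have h1 : Nat.card N = Nat.card (N ⧸ ρ0.ker) * Nat.card ρ0.ker :=
        AddSubgroup.card_eq_card_quotient_mul_card_addSubgroup ρ0.ker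
      have h2 : Nat.card (N ⧸ ρ0.ker) = Nat.card W :=
        Nat.card_congr (QuotientAddGroup.quotientKerEquivRange ρ0).toEquiv
      rw [← hcard, h1, h2]
    by_contra hcon
    push_neg at hcon
    have : Nat.card W = p ^ q := le_antisymm (hprod ▸ Nat.le_mul_of_pos_right _ (by omega)) hcon
    have h2 : p ^ q * 2 ≤ p ^ q * Nat.card ρ0.ker := Nat.mul_le_mul_left _ hker
    rw [this] at hprod
    omega
  -- bounds on r
  have hr1 : 1 ≤ r := by
    rcases Nat.eq_zero_or_pos r with h | h
    · rw [h, pow_zero] at hcW; omega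
    · exact h
  have hrq' : r < q := by
    by_contra hcon
    push_neg at hcon
    have : r = q := le_antisymm hrq hcon
    rw [this] at hcW
    omega
  -- a divides p^r - 1
  have hadvd2 : a ∣ p ^ r - 1 := by
    have hcnt := groupcount (fun x => x ∈ W ∧ x ≠ 0)
      (fun x hx => hx.2) (fun u x hx => ⟨hWleft _ _ hx.1, ?_⟩)
    · have hcard2 : Nat.card {x : N // x ∈ W ∧ x ≠ 0} = p ^ r - 1 := by
        have e : {x : N // x ∈ W ∧ x ≠ 0} ≃ {y : W // y ≠ 0} :=
        { toFun := fun x => ⟨⟨x.1, x.2.1⟩, fun h => x.2.2 (congrArg Subtype.val h)⟩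
          invFun := fun y => ⟨y.1.1, y.1.2, fun h => y.2 (Subtype.ext h)⟩
          left_inv := fun x => rfl
          right_inv := fun y => rfl }
        rw [Nat.card_congr e, card_ne_compl (0 : W), hcW]
      rwa [hcard2] at hcnt
    · intro h0
      apply hx.2
      have : x = ((u⁻¹ : Nˣ) : N) * ((u : N) * x) := by
        rw [← hassoc, ← Units.val_mul, inv_mul_cancel, Units.val_one, honel]
      rw [this, h0, hzero]
  -- conclude a ∣ p - 1
  have hadvdp1 : a ∣ p - 1 := by
    have hgcd : Nat.gcd r q = 1 := by
      have hnd : ¬ q ∣ r := Nat.not_dvd_of_pos_of_lt hr1 hrq'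
      exact ((hq.coprime_iff_not_dvd).mpr hnd).symm
    exact dvd_pow_sub_one_gcd hp.two_le hadvd2 hadvd1 hgcd
  -- the additive order of 1 is p
  letI : NeZero t := ⟨ht0⟩
  letI : Fact (1 < t) := ⟨by omega⟩
  have hFt : ∀ c d : ZMod t, ((c.val • (1 : N)) * (d.val • (1 : N))) = ((c * d).val • (1 : N)) := by
    intro c d
    rw [hmul1, ZMod.val_mul, hmod]
  let ψt : (ZMod t)ˣ → Nˣ := fun c =>
    { val := (c : ZMod t).val • 1
      inv := ((c⁻¹ : (ZMod t)ˣ) : ZMod t).val • 1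
      val_inv := by rw [hFt, ← Units.val_mul, mul_inv_cancel, Units.val_one, ZMod.val_one, one_nsmul]
      inv_val := by rw [hFt, ← Units.val_mul, inv_mul_cancel, Units.val_one, ZMod.val_one, one_nsmul] }
  have hψtinj : Function.Injective ψt := by
    intro c d hcd
    have h1 : ((c : ZMod t)).val • (1 : N) = ((d : ZMod t)).val • 1 := congrArg Units.val hcd
    have h2 := hinj1 _ _ (ZMod.val_lt _) (ZMod.val_lt _) h1
    exact Units.ext (ZMod.val_injective t h2)
  have htot : Nat.totient t ≤ p - 1 := by
    have h1 : Nat.card (ZMod t)ˣ = Nat.totient t := by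
      rw [Nat.card_eq_fintype_card, ZMod.card_units_eq_totient]
    have h2 : Nat.card (ZMod t)ˣ ≤ a := ha ▸ Nat.card_le_card_of_injective ψt hψtinj
    have h3 : a ≤ p - 1 := Nat.le_of_dvd (by have := hp.two_le; omega) hadvdp1
    omega
  obtain ⟨k, hkq, hkt⟩ := (Nat.dvd_prime_pow hp).mp htdvd
  have htp : t = p := by
    rcases Nat.eq_zero_or_pos k with h0 | hpos
    · rw [h0, pow_zero] at hkt; omega
    · have hk1 : k = 1 := by
        by_contra hne
        rw [hkt, Nat.totient_prime_pow hp hpos] at htot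
        have h4 : 2 ≤ p ^ (k - 1) := by
          calc 2 ≤ p := hp.two_le
          _ = p ^ 1 := (pow_one p).symm
          _ ≤ p ^ (k - 1) := Nat.pow_le_pow_right hp.pos (by omega)
        have h5 : 2 * (p - 1) ≤ p ^ (k - 1) * (p - 1) := Nat.mul_le_mul_right _ h4
        have := hp.two_le
        omega
      rw [hkt, hk1, pow_one]
  have hmodp : ∀ m : ℕ, (m % p) • (1 : N) = m • (1 : N) := fun m => by
    rw [← htp]; exact hmod m
  have hinj1p : ∀ m n : ℕ, m < p → n < p → m • (1 : N) = n • (1 : N) → m = n := fun m n hm hn =>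
    hinj1 m n (htp ▸ hm) (htp ▸ hn)
  letI : NeZero p := ⟨hp.pos.ne'⟩
  letI : Fact (1 < p) := ⟨hp.one_lt⟩
  letI : Fact p.Prime := ⟨hp⟩
  have hFp : ∀ c d : ZMod p, ((c.val • (1 : N)) * (d.val • (1 : N))) = ((c * d).val • (1 : N)) := by
    intro c d
    rw [hmul1, ZMod.val_mul, hmodp]
  let ψ : (ZMod p)ˣ → Nˣ := fun c =>
    { val := (c : ZMod p).val • 1
      inv := ((c⁻¹ : (ZMod p)ˣ) : ZMod p).val • 1
      val_inv := by rw [hFp, ← Units.val_mul, mul_inv_cancel, Units.val_one, ZMod.val_one, one_nsmul]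
      inv_val := by rw [hFp, ← Units.val_mul, inv_mul_cancel, Units.val_one, ZMod.val_one, one_nsmul] }
  have hψinj : Function.Injective ψ := by
    intro c d hcd
    have h1 : ((c : ZMod p)).val • (1 : N) = ((d : ZMod p)).val • 1 := congrArg Units.val hcd
    have h2 := hinj1p _ _ (ZMod.val_lt _) (ZMod.val_lt _) h1
    exact Units.ext (ZMod.val_injective p h2)
  have hcardZp : Nat.card (ZMod p)ˣ = p - 1 := by
    rw [Nat.card_eq_fintype_card, ZMod.card_units_eq_totient, Nat.totient_prime hp]
  have hcardU : a = p - 1 := by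
    have h2 : Nat.card (ZMod p)ˣ ≤ a := ha ▸ Nat.card_le_card_of_injective ψ hψinj
    have h3 : a ≤ p - 1 := Nat.le_of_dvd (by have := hp.two_le; omega) hadvdp1
    omega
  have hψbij : Function.Bijective ψ := by
    refine (Nat.bijective_iff_injective_and_card ψ).mpr ⟨hψinj, ?_⟩
    rw [hcardZp, ← ha, hcardU]
  have hsurj := hψbij.2
  -- the map F
  set F : ZMod p → N := fun c => c.val • (1 : N) with hFdef
  have hFadd : ∀ c d : ZMod p, F (c + d) = F c + F d := by
    intro c d
    show ((c + d).val) • (1 : N) = c.val • (1 : N) + d.val • (1 : N)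
    rw [ZMod.val_add, hmodp, add_nsmul]
  have hFinj : Function.Injective F := by
    intro c d h
    exact ZMod.val_injective p (hinj1p _ _ (ZMod.val_lt c) (ZMod.val_lt d) h)
  have hF1 : F 1 = 1 := by
    show (1 : ZMod p).val • (1 : N) = 1
    rw [ZMod.val_one, one_nsmul]
  have hFmul : ∀ c d : ZMod p, F (c * d) = F c * F d := fun c d => (hFp c d).symm
  have hF0 : F 0 = 0 := by
    show (0 : ZMod p).val • (1 : N) = 0
    rw [ZMod.val_zero, zero_nsmul]
  have hFunit : ∀ c : ZMod p, c ≠ 0 → ∃ v : N, F c * v = 1 ∧ v * F c = 1 := by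
    intro c hc
    have hcu : IsUnit c := isUnit_iff_ne_zero.mpr hc
    refine ⟨F ((hcu.unit⁻¹ : (ZMod p)ˣ) : ZMod p), ?_, ?_⟩
    · calc F c * F ((hcu.unit⁻¹ : (ZMod p)ˣ) : ZMod p)
          = F (c * ((hcu.unit⁻¹ : (ZMod p)ˣ) : ZMod p)) := (hFmul _ _).symm
      _ = F 1 := by rw [hcu.mul_val_inv]
      _ = 1 := hF1
    · calc F ((hcu.unit⁻¹ : (ZMod p)ˣ) : ZMod p) * F c
          = F (((hcu.unit⁻¹ : (ZMod p)ˣ) : ZMod p) * c) := (hFmul _ _).symm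
      _ = F 1 := by rw [hcu.val_inv_mul]
      _ = 1 := hF1
  have hclass : ∀ u : N, (∃ v : N, u * v = 1 ∧ v * u = 1) →
      ∃ c : (ZMod p)ˣ, F ((c : ZMod p)) = u := by
    intro u hu
    obtain ⟨c, hc⟩ := hsurj ⟨u, Classical.choose hu, (Classical.choose_spec hu).1,
      (Classical.choose_spec hu).2⟩
    exact ⟨c, congrArg Units.val hc⟩
  refine ⟨?_, ?_, ?_⟩
  · calc Nat.card {u : N // ∃ v : N, u * v = 1 ∧ v * u = 1}
        = Nat.card Nˣ := (Nat.card_congr eU).symm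
    _ = p - 1 := by rw [← ha, hcardU]
  · intro A B hA hB hAB
    obtain ⟨cA, hcA⟩ := hclass A hA
    obtain ⟨cB, hcB⟩ := hclass B hB
    have hFsub : F ((cA : ZMod p) - (cB : ZMod p)) = F (cA : ZMod p) - F (cB : ZMod p) := by
      have h2 := hFadd ((cA : ZMod p) - (cB : ZMod p)) (cB : ZMod p)
      rw [sub_add_cancel] at h2
      exact eq_sub_of_add_eq h2.symm
    have hsub' : A - B = F ((cA : ZMod p) - (cB : ZMod p)) := by
      rw [hFsub, hcA, hcB]
    have hne0 : ((cA : ZMod p) - (cB : ZMod p)) ≠ 0 := by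
      intro h
      apply hAB
      have hceq : (cA : ZMod p) = (cB : ZMod p) := by rwa [sub_eq_zero] at h
      rw [← hcA, ← hcB, hceq]
    rw [hsub']
    exact hFunit _ hne0
  · refine ⟨F, hFinj, ?_, hFadd, hFmul, hF1⟩
    ext x
    simp only [Set.mem_range, Set.mem_setOf_eq]
    constructor
    · rintro ⟨c, rfl⟩
      rcases eq_or_ne c 0 with h0 | hne
      · left; rw [h0, hF0]
      · right; exact hFunit c hne
    · rintro (rfl | hx)
      · exact ⟨0, hF0⟩
      · obtain ⟨c, hc⟩ := hclass x hx
        exact ⟨(c : ZMod p), hc⟩
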